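/- Fix a timelike unit vector e₀ and let ρ ≠ 1 be a rotation and β a boost with respect to e₀. Let E(ρ,β) be the set of unit vectors orthogonal to e₀ lying in FP(ρ)^⊥ ∩ FP(β). Then E(ρ,β) is homeomorphic to the circle S¹ if ρβ = βρ, and otherwise E(ρ,β) = {e, -e} for some time-zero unit vector e. -/

import Mathlib

noncomputable section

/-- Minkowski spacetime ℝ^{1+3}. -/
abbrev V4 : Type := Fin 4 → ℝ

/-- The Minkowski metric of signature (+,-,-,-). -/
def mg (x y : V4) : ℝ := x 0 * y 0 - x 1 * y 1 - x 2 * y 2 - x 3 * y 3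

/-- The distinguished future-directed timelike unit vector. -/
def e0 : V4 := fun i => if i = 0 then 1 else 0

/-- A restricted Lorentz transformation: preserves the metric, has determinant 1,
and preserves the time orientation. -/
def IsRestrictedLorentz (T : V4 →ₗ[ℝ] V4) : Prop :=
  (∀ x y, mg (T x) (T y) = mg x y) ∧ LinearMap.det T = 1 ∧ 0 < (T e0) 0

/-- The Euclidean inner product `⟨x,y⟩_e = -g(x,y) + 2 g(x,e) g(y,e)`
determined by a timelike unit vector `e`. -/
def inn (e x y : V4) : ℝ := -mg x y + 2 * mg x e * mg y e

/-- A rotation with respect to `e`: a restricted Lorentz transformation fixing `e`. -/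
def IsRotationAt (e : V4) (T : V4 →ₗ[ℝ] V4) : Prop :=
  IsRestrictedLorentz T ∧ T e = e

/-- A boost with respect to `e`: a restricted Lorentz transformation that is
self-adjoint and positive with respect to `⟨·,·⟩_e`. -/
def IsBoostAt (e : V4) (T : V4 →ₗ[ℝ] V4) : Prop :=
  IsRestrictedLorentz T ∧ (∀ x y, inn e (T x) y = inn e x (T y)) ∧
    (∀ x, x ≠ 0 → 0 < inn e (T x) x)

/-- The set `E(ρ,β)` of time-zero unit vectors lying in `FP(ρ)^⊥ ∩ FP(β)`. -/
def ESet (ρ β : V4 →ₗ[ℝ] V4) : Set V4 :=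
  {e : V4 | mg e e = -1 ∧ mg e e0 = 0 ∧ (∀ y, ρ y = y → mg e y = 0) ∧ β e = e}

/-! ### Auxiliary machinery -/

open Module
open scoped Matrix

abbrev E4 : Type := EuclideanSpace ℝ (Fin 4)
def vE (x : V4) : E4 := WithLp.toLp 2 x
def uV (x : E4) : V4 := WithLp.ofLp x

def dd (x y : V4) : ℝ := x 0 * y 0 + x 1 * y 1 + x 2 * y 2 + x 3 * y 3

lemma dd_comm (x y : V4) : dd x y = dd y x := by unfold dd; ring
lemma mg_dd (x y : V4) : mg x y = 2 * (x 0 * y 0) - dd x y := by unfold mg dd; ring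
lemma dd_e0_left (x : V4) : dd e0 x = x 0 := by simp [dd, e0]
lemma dd_e0_right (x : V4) : dd x e0 = x 0 := by simp [dd, e0]
lemma mg_e0_right (x : V4) : mg x e0 = x 0 := by simp [mg, e0]
lemma inn_e0 (x y : V4) : inn e0 x y = dd x y := by
  unfold inn; rw [mg_e0_right, mg_e0_right, mg_dd]; ring
lemma dd_add_left (x y z : V4) : dd (x + y) z = dd x z + dd y z := by simp [dd]; ring
lemma dd_add_right (x y z : V4) : dd x (y + z) = dd x y + dd x z := by simp [dd]; ring
lemma dd_sub_left (x y z : V4) : dd (x - y) z = dd x z - dd y z := by simp [dd]; ring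
lemma dd_sub_right (x y z : V4) : dd x (y - z) = dd x y - dd x z := by simp [dd]; ring
lemma dd_smul_left (a : ℝ) (x y : V4) : dd (a • x) y = a * dd x y := by simp [dd]; ring
lemma dd_smul_right (a : ℝ) (x y : V4) : dd x (a • y) = a * dd x y := by simp [dd]; ring
lemma dd_neg_left (x y : V4) : dd (-x) y = -dd x y := by simp [dd]; ring
lemma dd_neg_right (x y : V4) : dd x (-y) = -dd x y := by simp [dd]; ring
lemma dd_zero_left (y : V4) : dd 0 y = 0 := by simp [dd]
lemma dd_self_nonneg (x : V4) : 0 ≤ dd x x := by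
  have h : dd x x = x 0 ^ 2 + x 1 ^ 2 + x 2 ^ 2 + x 3 ^ 2 := by unfold dd; ring
  rw [h]; positivity
lemma eq_zero_of_dd {x : V4} (h : dd x x = 0) : x = 0 := by
  unfold dd at h
  have h0 : x 0 = 0 := by nlinarith [sq_nonneg (x 0), sq_nonneg (x 1), sq_nonneg (x 2), sq_nonneg (x 3)]
  have h1 : x 1 = 0 := by nlinarith [sq_nonneg (x 0), sq_nonneg (x 1), sq_nonneg (x 2), sq_nonneg (x 3)]
  have h2 : x 2 = 0 := by nlinarith [sq_nonneg (x 0), sq_nonneg (x 1), sq_nonneg (x 2), sq_nonneg (x 3)]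
  have h3 : x 3 = 0 := by nlinarith [sq_nonneg (x 0), sq_nonneg (x 1), sq_nonneg (x 2), sq_nonneg (x 3)]
  funext i; fin_cases i <;> simpa
lemma dd_pos_of_ne {x : V4} (h : x ≠ 0) : 0 < dd x x :=
  lt_of_le_of_ne (dd_self_nonneg x) (fun h' => h (eq_zero_of_dd h'.symm))
lemma dd_e0e0 : dd e0 e0 = 1 := by simp [dd, e0]
lemma mg_e0e0 : mg e0 e0 = 1 := by simp [mg, e0]

lemma ip_dd (x y : V4) : (inner ℝ (vE x) (vE y) : ℝ) = dd x y := by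
  simp [vE, PiLp.inner_apply, RCLike.inner_apply, Fin.sum_univ_four, dd]; ring

lemma exists_unit (x : V4) (hx : x ≠ 0) : ∃ s : ℝ, dd (s • x) (s • x) = 1 := by
  refine ⟨(Real.sqrt (dd x x))⁻¹, ?_⟩
  have h := dd_pos_of_ne hx
  rw [dd_smul_left, dd_smul_right]
  rw [← Real.sqrt_mul_self h.le]
  have hs : Real.sqrt (dd x x) ≠ 0 := ne_of_gt (Real.sqrt_pos.mpr h)
  field_simp
  rw [Real.sq_sqrt (Real.sqrt_nonneg _)]

lemma mem_orth (S : Set E4) (x : V4) (h : ∀ s : V4, vE s ∈ S → dd s x = 0) :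
    vE x ∈ (Submodule.span ℝ S)ᗮ := by
  rw [Submodule.mem_orthogonal]
  intro u hu
  induction hu using Submodule.span_induction with
  | mem s hs => exact (ip_dd s x).trans (h s hs)
  | zero => simp
  | add a b _ _ ha hb => rw [inner_add_left, ha, hb, add_zero]
  | smul a c _ hc => rw [inner_smul_left, hc, mul_zero]

lemma on2 (a b : V4) (haa : dd a a = 1) (hbb : dd b b = 1) (hab : dd a b = 0) :
    Orthonormal ℝ (![vE a, vE b] : Fin 2 → E4) := by
  unfold dd at haa hbb hab
  rw [orthonormal_iff_ite]
  intro i j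
  fin_cases i <;> fin_cases j <;>
    simp [ip_dd, dd, -inner_self_eq_norm_sq_to_K, -real_inner_self_eq_norm_sq] <;> linarith

lemma on3 (a b c : V4) (haa : dd a a = 1) (hbb : dd b b = 1) (hcc : dd c c = 1)
    (hab : dd a b = 0) (hac : dd a c = 0) (hbc : dd b c = 0) :
    Orthonormal ℝ (![vE a, vE b, vE c] : Fin 3 → E4) := by
  unfold dd at haa hbb hcc hab hac hbc
  rw [orthonormal_iff_ite]
  intro i j
  fin_cases i <;> fin_cases j <;>
    simp [ip_dd, dd, -inner_self_eq_norm_sq_to_K, -real_inner_self_eq_norm_sq] <;> linarith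

lemma on4 (a b c d : V4) (haa : dd a a = 1) (hbb : dd b b = 1) (hcc : dd c c = 1)
    (hdd4 : dd d d = 1) (hab : dd a b = 0) (hac : dd a c = 0) (had : dd a d = 0)
    (hbc : dd b c = 0) (hbd : dd b d = 0) (hcd : dd c d = 0) :
    Orthonormal ℝ (![vE a, vE b, vE c, vE d] : Fin 4 → E4) := by
  unfold dd at haa hbb hcc hdd4 hab hac had hbc hbd hcd
  rw [orthonormal_iff_ite]
  intro i j
  fin_cases i <;> fin_cases j <;>
    simp [ip_dd, dd, -inner_self_eq_norm_sq_to_K, -real_inner_self_eq_norm_sq] <;> linarith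

lemma complete4 (a b c d : V4)
    (h : Orthonormal ℝ (![vE a, vE b, vE c, vE d] : Fin 4 → E4)) (x : V4) :
    x = dd a x • a + dd b x • b + dd c x • c + dd d x • d := by
  have hcard : Fintype.card (Fin 4) = finrank ℝ E4 := by simp
  let B : Basis (Fin 4) ℝ E4 := basisOfLinearIndependentOfCardEqFinrank h.linearIndependent hcard
  have hBc : ⇑B = ![vE a, vE b, vE c, vE d] := coe_basisOfLinearIndependentOfCardEqFinrank _ _
  let OB : OrthonormalBasis (Fin 4) ℝ E4 := B.toOrthonormalBasis (by rw [hBc]; exact h)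
  have hOB : ⇑OB = ![vE a, vE b, vE c, vE d] := by
    rw [Basis.coe_toOrthonormalBasis, hBc]
  have hsum := OB.sum_repr (vE x)
  rw [Fin.sum_univ_four] at hsum
  have hr : ∀ i, OB.repr (vE x) i = inner ℝ (OB i) (vE x) := fun i =>
    OB.repr_apply_apply (vE x) i
  rw [hr 0, hr 1, hr 2, hr 3] at hsum
  rw [hOB] at hsum
  simp only [Matrix.cons_val_zero, Matrix.cons_val_one, Matrix.head_cons,
    Matrix.cons_val_two, Matrix.tail_cons, Matrix.cons_val_three, ip_dd] at hsum
  have h2 := congrArg uV hsum.symm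
  simpa [uV, vE] using h2

/-! ### Rotation lemmas -/

lemma rot0 {T : V4 →ₗ[ℝ] V4} (hT : IsRotationAt e0 T) : ∀ x, T x 0 = x 0 := by
  intro x
  have h := hT.1.1 x e0
  rw [hT.2, mg_e0_right, mg_e0_right] at h
  exact h

lemma rotdd {T : V4 →ₗ[ℝ] V4} (hT : IsRotationAt e0 T) :
    ∀ x y, dd (T x) (T y) = dd x y := by
  intro x y
  have h := hT.1.1 x y
  rw [mg_dd, mg_dd, rot0 hT, rot0 hT] at h
  linarith

lemma exists_axis {T : V4 →ₗ[ℝ] V4} (hT : IsRotationAt e0 T) :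
    ∃ U : V4, T U = U ∧ U 0 = 0 ∧ dd U U = 1 := by
  classical
  set M := LinearMap.toMatrix' T with hM
  have happ : ∀ x : V4, T x = M.mulVec x := by
    intro x
    rw [hM, ← Matrix.toLin'_apply, Matrix.toLin'_toMatrix']
  have hMij : ∀ i j, M i j = T (fun k => if k = j then 1 else 0) i := by
    intro i j
    rw [hM, LinearMap.toMatrix'_apply]
    rw [show (Pi.single j 1 : V4) = fun k => if k = j then 1 else 0 from by funext k; simp [Pi.single_apply]]
  have hrow0 : ∀ j, M 0 j = e0 j := by
    intro j
    rw [hMij, rot0 hT]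
    simp [e0, eq_comm]
  set N := M.submatrix Fin.succ Fin.succ with hN
  have hdetM : M.det = 1 := by rw [hM, LinearMap.det_toMatrix']; exact hT.1.2.1
  have hcol0 : ∀ i, M i 0 = e0 i := by
    intro i
    have : (fun k : Fin 4 => if k = 0 then (1:ℝ) else 0) = e0 := rfl
    rw [hMij, this, hT.2]
  have hdetN : N.det = 1 := by
    have h2 := Matrix.det_succ_column_zero M
    rw [Fin.sum_univ_succ] at h2
    simp only [hcol0] at h2
    simp [e0, Fin.succ_ne_zero, Fin.succAbove_zero] at h2
    rw [← hdetM, h2]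
  have hNTN : Nᵀ * N = 1 := by
    ext i j
    have hkey := rotdd hT (fun k => if k = (i.succ : Fin 4) then 1 else 0)
      (fun k => if k = (j.succ : Fin 4) then 1 else 0)
    have hδ : dd (fun k => if k = (i.succ : Fin 4) then 1 else 0)
        (fun k => if k = (j.succ : Fin 4) then 1 else 0) = if i = j then 1 else 0 := by
      have h4 : ∀ x y : V4, dd x y = ∑ k, x k * y k := by
        intro x y; rw [Fin.sum_univ_four]; rfl
      rw [h4]
      simp [Fin.succ_inj, eq_comm]
    have h0i : T (fun k => if k = (i.succ : Fin 4) then 1 else 0) 0 = 0 := by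
      rw [rot0 hT]
      simp [(Fin.succ_ne_zero i).symm, Ne.symm (Fin.succ_ne_zero i)]
    rw [hδ] at hkey
    unfold dd at hkey
    rw [h0i] at hkey
    have hNent : ∀ (k l : Fin 3), N k l = T (fun k' => if k' = (l.succ : Fin 4) then 1 else 0) k.succ := by
      intro k l
      rw [hN, Matrix.submatrix_apply, hMij]
    rw [Matrix.mul_apply, Fin.sum_univ_three]
    simp only [Matrix.transpose_apply, Matrix.one_apply]
    rw [hNent 0 i, hNent 0 j, hNent 1 i, hNent 1 j, hNent 2 i, hNent 2 j]
    have e1 : (Fin.succ 0 : Fin 4) = 1 := rfl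
    have e2 : (Fin.succ 1 : Fin 4) = 2 := rfl
    have e3 : (Fin.succ 2 : Fin 4) = 3 := rfl
    rw [e1, e2, e3]
    linarith [hkey]
  have hNNT : N * Nᵀ = 1 := mul_eq_one_comm.mp hNTN
  have hdet0 : (1 - N).det = 0 := by
    have h1 : Nᵀ * (1 - N) = Nᵀ - 1 := by
      rw [Matrix.mul_sub, Matrix.mul_one, hNTN]
    have h2 : (Nᵀ).det * (1 - N).det = (Nᵀ - 1).det := by rw [← Matrix.det_mul, h1]
    rw [Matrix.det_transpose, hdetN, one_mul] at h2
    have h3 : (Nᵀ - 1 : Matrix (Fin 3) (Fin 3) ℝ) = (N - 1)ᵀ := by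
      rw [Matrix.transpose_sub, Matrix.transpose_one]
    rw [h3, Matrix.det_transpose] at h2
    have h4 : (N - 1 : Matrix (Fin 3) (Fin 3) ℝ) = -(1 - N) := by rw [neg_sub]
    rw [h4, Matrix.det_neg] at h2
    simp at h2
    linarith
  obtain ⟨v, hv0, hv⟩ := Matrix.exists_mulVec_eq_zero_iff.mpr hdet0
  have hvN : N.mulVec v = v := by
    rw [Matrix.sub_mulVec, Matrix.one_mulVec, sub_eq_zero] at hv
    exact hv.symm
  set V : V4 := fun i => Fin.cases 0 (fun k => v k) i with hV
  have hV0 : V 0 = 0 := rfl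
  have hVs : ∀ k : Fin 3, V k.succ = v k := by
    intro k
    simp [hV]
  have hTV : T V = V := by
    funext i
    induction i using Fin.cases with
    | zero => rw [rot0 hT]
    | succ k =>
      rw [happ]
      show (M.mulVec V) k.succ = V k.succ
      have h5 : (M.mulVec V) k.succ = ∑ j : Fin 4, M k.succ j * V j := by
        simp [Matrix.mulVec, dotProduct]
      rw [h5, Fin.sum_univ_succ, hV0, mul_zero, zero_add, hVs]
      have h6 : ∀ j : Fin 3, M k.succ j.succ * V j.succ = N k j * v j := by
        intro j
        rw [hVs, hN]
        rfl
      rw [Finset.sum_congr rfl (fun j _ => h6 j)]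
      have h7 : ∑ j : Fin 3, N k j * v j = (N.mulVec v) k := by
        simp [Matrix.mulVec, dotProduct]
      rw [h7, hvN]
  have hVne : V ≠ 0 := by
    intro h
    apply hv0
    funext k
    have : V k.succ = 0 := by rw [h]; rfl
    rw [hVs] at this
    exact this
  obtain ⟨s, hs⟩ := exists_unit V hVne
  refine ⟨s • V, ?_, ?_, hs⟩
  · rw [map_smul, hTV]
  · show s * V 0 = 0
    rw [hV0, mul_zero]

lemma axis_unique {T : V4 →ₗ[ℝ] V4} (hT : IsRotationAt e0 T) (hT1 : T ≠ LinearMap.id)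
    {U : V4} (hTU : T U = U) (hU0 : U 0 = 0) (hUU : dd U U = 1) :
    ∀ y, T y = y → y = y 0 • e0 + dd U y • U := by
  intro y hy
  by_contra hne
  set r : V4 := y - y 0 • e0 - dd U y • U with hr
  have hrne : r ≠ 0 := by
    intro h
    apply hne
    rw [hr, sub_sub] at h
    exact sub_eq_zero.mp h
  have hr0 : r 0 = 0 := by
    have : r 0 = y 0 - y 0 * e0 0 - dd U y * U 0 := rfl
    rw [this, hU0]
    simp [e0]
  have hUr : dd U r = 0 := by
    rw [hr, dd_sub_right, dd_sub_right, dd_smul_right, dd_smul_right, dd_e0_right,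
      hU0, hUU]
    ring
  have hTr : T r = r := by
    rw [hr]
    simp only [map_sub, map_smul, hy, hT.2, hTU]
  obtain ⟨s, hAA⟩ := exists_unit r hrne
  set A : V4 := s • r with hA
  have hTA : T A = A := by rw [hA, map_smul, hTr]
  have hA0 : A 0 = 0 := by
    have : A 0 = s * r 0 := rfl
    rw [this, hr0, mul_zero]
  have hUA : dd U A = 0 := by rw [hA, dd_smul_right, hUr, mul_zero]
  have he0U : dd e0 U = 0 := by rw [dd_e0_left, hU0]
  have he0A : dd e0 A = 0 := by rw [dd_e0_left, hA0]
  have hon3 : Orthonormal ℝ (![vE e0, vE U, vE A] : Fin 3 → E4) :=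
    on3 _ _ _ dd_e0e0 hUU hAA he0U he0A hUA
  set K := (Submodule.span ℝ (Set.range (![vE e0, vE U, vE A] : Fin 3 → E4)))ᗮ with hK
  have hfrspan : finrank ℝ (Submodule.span ℝ (Set.range (![vE e0, vE U, vE A] : Fin 3 → E4))) = 3 := by
    rw [finrank_span_eq_card hon3.linearIndependent]
    simp
  have hfrK : finrank ℝ K = 1 := by
    have htot := Submodule.finrank_add_finrank_orthogonal
      (K := Submodule.span ℝ (Set.range (![vE e0, vE U, vE A] : Fin 3 → E4)))
    have h4 : finrank ℝ E4 = 4 := finrank_euclideanSpace_fin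
    rw [← hK, hfrspan, h4] at htot
    omega
  have hKne : K ≠ ⊥ := by
    intro h
    rw [h] at hfrK
    simp at hfrK
  obtain ⟨B0, hB0K, hB0ne⟩ := Submodule.ne_bot_iff K |>.mp hKne
  have hB0ne' : uV B0 ≠ 0 := by
    intro h; apply hB0ne; have := congrArg (WithLp.toLp 2) h; simpa [uV] using this
  obtain ⟨t, hBB⟩ := exists_unit (uV B0) hB0ne'
  set B : V4 := t • uV B0 with hB
  have hBK : vE B ∈ K := K.smul_mem t hB0K
  have hperp : ∀ u ∈ Submodule.span ℝ (Set.range (![vE e0, vE U, vE A] : Fin 3 → E4)),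
      (inner ℝ u (vE B) : ℝ) = 0 := (Submodule.mem_orthogonal _ _).mp hBK
  have he0B : dd e0 B = 0 := by
    rw [← ip_dd]; exact hperp _ (Submodule.subset_span ⟨0, rfl⟩)
  have hUB : dd U B = 0 := by
    rw [← ip_dd]; exact hperp _ (Submodule.subset_span ⟨1, rfl⟩)
  have hAB : dd A B = 0 := by
    rw [← ip_dd]; exact hperp _ (Submodule.subset_span ⟨2, rfl⟩)
  have hBne : B ≠ 0 := by
    intro h
    rw [h] at hBB
    simp [dd] at hBB
  have hTBK : vE (T B) ∈ K := by
    rw [hK]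
    apply mem_orth
    intro q hq
    obtain ⟨i, hi⟩ := hq
    fin_cases i
    · have hq' : e0 = q := congrArg uV hi
      rw [← hq', ← hT.2, rotdd hT]
      exact he0B
    · have hq' : U = q := congrArg uV hi
      rw [← hq', ← hTU, rotdd hT]
      exact hUB
    · have hq' : A = q := congrArg uV hi
      rw [← hq', ← hTA, rotdd hT]
      exact hAB
  have hspanB : Submodule.span ℝ {vE B} = K := by
    apply Submodule.eq_of_le_of_finrank_le
    · rw [Submodule.span_singleton_le_iff_mem]
      exact hBK
    · rw [hfrK, finrank_span_singleton (show vE B ≠ 0 from fun h => hBne (congrArg uV h))]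
  obtain ⟨t2, ht2⟩ := Submodule.mem_span_singleton.mp (hspanB ▸ hTBK)
  have ht2' : T B = t2 • B := congrArg uV ht2.symm
  have ht2sq : t2 * t2 = 1 := by
    have h1 := rotdd hT B B
    rw [ht2', dd_smul_left, dd_smul_right, hBB] at h1
    linarith
  have hon4 : Orthonormal ℝ (![vE e0, vE U, vE A, vE B] : Fin 4 → E4) :=
    on4 _ _ _ _ dd_e0e0 hUU hAA hBB he0U he0A he0B hUA hUB hAB
  rcases mul_self_eq_one_iff.mp ht2sq with h1 | hm1
  · rw [h1, one_smul] at ht2'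
    apply hT1
    apply LinearMap.ext
    intro x
    have hc := complete4 e0 U A B hon4 x
    rw [LinearMap.id_apply]
    nth_rewrite 1 [hc]
    simp only [map_add, map_smul, hT.2, hTU, hTA, ht2']
    exact hc.symm
  · rw [hm1] at ht2'
    let T' : E4 →ₗ[ℝ] E4 := ((WithLp.linearEquiv 2 ℝ V4).symm : V4 →ₗ[ℝ] E4) ∘ₗ T ∘ₗ
      (((WithLp.linearEquiv 2 ℝ V4).symm.symm : E4 ≃ₗ[ℝ] V4) : E4 →ₗ[ℝ] V4)
    have hdetT' : LinearMap.det T' = 1 := (LinearMap.det_conj T (WithLp.linearEquiv 2 ℝ V4).symm).trans hT.1.2.1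
    let Bas : Basis (Fin 4) ℝ E4 :=
      basisOfLinearIndependentOfCardEqFinrank hon4.linearIndependent
        (by simp [finrank_euclideanSpace_fin])
    have hBasc : ⇑Bas = ![vE e0, vE U, vE A, vE B] :=
      coe_basisOfLinearIndependentOfCardEqFinrank _ _
    have hb0 : Bas 0 = vE e0 := by rw [hBasc]; rfl
    have hb1 : Bas 1 = vE U := by rw [hBasc]; rfl
    have hb2 : Bas 2 = vE A := by rw [hBasc]; rfl
    have hb3 : Bas 3 = vE B := by rw [hBasc]; rfl
    have hi0 : T' (Bas 0) = Bas 0 := by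
      rw [hb0]; exact congrArg vE hT.2
    have hi1 : T' (Bas 1) = Bas 1 := by rw [hb1]; exact congrArg vE hTU
    have hi2 : T' (Bas 2) = Bas 2 := by rw [hb2]; exact congrArg vE hTA
    have hi3 : T' (Bas 3) = -Bas 3 := by
      rw [hb3]
      show vE (T B) = -(vE B)
      rw [ht2']
      show vE (-1 • B) = -(vE B)
      rw [neg_smul, one_smul]
      rfl
    have hMt : LinearMap.toMatrix Bas Bas T' = Matrix.diagonal ![1, 1, 1, (-1 : ℝ)] := by
      ext i j
      rw [LinearMap.toMatrix_apply]
      fin_cases j <;>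
        simp only [show ((⟨0, by omega⟩ : Fin 4)) = 0 from rfl,
          show ((⟨1, by omega⟩ : Fin 4)) = 1 from rfl,
          show ((⟨2, by omega⟩ : Fin 4)) = 2 from rfl,
          show ((⟨3, by omega⟩ : Fin 4)) = 3 from rfl,
          hi0, hi1, hi2, hi3, map_neg, Basis.repr_self] <;>
        fin_cases i <;>
        simp [Matrix.diagonal, Finsupp.single_apply,
          show (3:Fin 4) ≠ 0 from by decide, show (3:Fin 4) ≠ 1 from by decide,
          show (3:Fin 4) ≠ 2 from by decide, show (0:Fin 4) ≠ 3 from by decide,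
          show (1:Fin 4) ≠ 3 from by decide, show (2:Fin 4) ≠ 3 from by decide]
    have hdet2 : LinearMap.det T' = -1 := by
      rw [← LinearMap.det_toMatrix Bas, hMt, Matrix.det_diagonal]
      simp [Fin.prod_univ_four]
    rw [hdetT'] at hdet2
    norm_num at hdet2
/-! ### Boost lemmas -/

section Boost

variable {S : V4 →ₗ[ℝ] V4}

lemma boost_sa (hS : IsBoostAt e0 S) : ∀ x y, dd (S x) y = dd x (S y) := by
  intro x y
  have h := hS.2.1 x y
  rwa [inn_e0, inn_e0] at h

lemma boost_pos (hS : IsBoostAt e0 S) : ∀ x, x ≠ 0 → 0 < dd (S x) x := by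
  intro x hx
  have h := hS.2.2 x hx
  rwa [inn_e0] at h

lemma boost_c2 (hS : IsBoostAt e0 S) {c : ℝ} {W : V4}
    (hc : c = (S e0) 0) (hW : W = S e0 - c • e0) :
    c ^ 2 = 1 + dd W W := by
  have hSe0 : S e0 = c • e0 + W := by rw [hW]; abel
  have hW0 : W 0 = 0 := by
    have h : W 0 = S e0 0 - c * e0 0 := by rw [hW]; rfl
    rw [h, ← hc]
    simp [e0]
  have hmg := hS.1.1 e0 e0
  rw [mg_e0e0, hSe0] at hmg
  have hcomp : (c • e0 + W) 0 = c := by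
    have h : (c • e0 + W) 0 = c * e0 0 + W 0 := rfl
    rw [h, hW0]
    simp [e0]
  rw [mg_dd, hcomp] at hmg
  simp only [dd_add_left, dd_add_right, dd_smul_left, dd_smul_right, dd_e0e0,
    dd_e0_left, dd_e0_right, hW0, hcomp] at hmg
  nlinarith [hmg]

lemma boost_mem_of_fix (hS : IsBoostAt e0 S) {c : ℝ} {W : V4}
    (hc : c = (S e0) 0) (hW : W = S e0 - c • e0) :
    ∀ x, S x = x → x 0 * (c - 1) = 0 ∧ dd W x = 0 := by
  have hSe0 : S e0 = c • e0 + W := by rw [hW]; abel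
  have hW0 : W 0 = 0 := by
    have h : W 0 = S e0 0 - c * e0 0 := by rw [hW]; rfl
    rw [h, ← hc]; simp [e0]
  intro x hx
  have hA : x 0 = c * x 0 + dd x W := by
    have h := boost_sa hS x e0
    rw [hx, dd_e0_right, hSe0, dd_add_right, dd_smul_right, dd_e0_right] at h
    linarith [h]
  have hB : c * x 0 - dd x W = x 0 := by
    have h := hS.1.1 x e0
    rw [hx, mg_e0_right, hSe0] at h
    have hcomp : (c • e0 + W) 0 = c := by
      have h2 : (c • e0 + W) 0 = c * e0 0 + W 0 := rfl
      rw [h2, hW0]; simp [e0]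
    rw [mg_dd, hcomp, dd_add_right, dd_smul_right, dd_e0_right] at h
    linarith [h]
  constructor
  · nlinarith [hA, hB]
  · rw [dd_comm]; linarith [hA, hB]

lemma boost_fix_of_mem (hS : IsBoostAt e0 S) {c : ℝ} {W : V4}
    (hc : c = (S e0) 0) (hW : W = S e0 - c • e0) :
    ∀ x, x 0 = 0 → dd W x = 0 → S x = x := by
  have hSe0 : S e0 = c • e0 + W := by rw [hW]; abel
  have hW0 : W 0 = 0 := by
    have h : W 0 = S e0 0 - c * e0 0 := by rw [hW]; rfl
    rw [h, ← hc]; simp [e0]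
  intro x hx0 hWx
  -- step 1 : (S x) 0 = 0
  have h1 : (S x) 0 = 0 := by
    have h := boost_sa hS x e0
    rw [dd_e0_right, hSe0, dd_add_right, dd_smul_right, dd_e0_right, hx0] at h
    rw [h, dd_comm x W, hWx]
    ring
  -- step 2 : dd W (S x) = 0
  have h2 : dd W (S x) = 0 := by
    have h := hS.1.1 x e0
    rw [mg_e0_right, hx0, hSe0] at h
    rw [mg_dd] at h
    simp only [dd_add_right, dd_smul_right, dd_e0_right, h1] at h
    rw [dd_comm]
    linarith [h]
  -- step 3 : S (S x) agrees with x against everything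
  have h3 : ∀ y, dd (S (S x)) y = dd x y := by
    intro y
    have ha := boost_sa hS (S x) y
    have hb := hS.1.1 x y
    rw [mg_dd, mg_dd, h1, hx0] at hb
    rw [ha]
    linarith [hb]
  -- step 4 : S (S x) = x
  have h4 : S (S x) = x := by
    have hz : dd (S (S x) - x) (S (S x) - x) = 0 := by
      rw [dd_sub_left, h3]
      ring
    exact sub_eq_zero.mp (eq_zero_of_dd hz)
  -- step 5 : positivity forces S x = x
  by_contra hne
  have hvne : S x - x ≠ 0 := sub_ne_zero.mpr hne
  have hSv : S (S x - x) = -(S x - x) := by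
    rw [map_sub, h4]
    abel
  have hp := boost_pos hS _ hvne
  rw [hSv, dd_neg_left] at hp
  have hnn := dd_self_nonneg (S x - x)
  linarith

end Boost
/-! ### The classification theorem -/

/-- Build a circle element from coordinates on the unit circle. -/
def mkC (a b : ℝ) (h : a ^ 2 + b ^ 2 = 1) : Circle :=
  ⟨⟨a, b⟩, by
    have hn : ‖(⟨a, b⟩ : ℂ)‖ = 1 := by
      rw [Complex.norm_def, Complex.normSq_mk]
      rw [show a * a + b * b = 1 by nlinarith]
      exact Real.sqrt_one
    exact mem_sphere_zero_iff_norm.mpr hn⟩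

lemma mkC_coe (a b : ℝ) (h : a ^ 2 + b ^ 2 = 1) : (mkC a b h : ℂ) = ⟨a, b⟩ := rfl

lemma cont_dd (y : V4) : Continuous (fun x : V4 => dd y x) := by
  unfold dd
  fun_prop

set_option maxHeartbeats 2000000 in
/-- For a nontrivial rotation `ρ` and a boost `β` (with respect to `e₀`), the set
`E(ρ,β)` is homeomorphic to the circle `S¹` if `ρ` and `β` commute, and otherwise
equals `{e, -e}` for some time-zero unit vector `e`. -/
theorem ESet_classification
    (ρ β : V4 →ₗ[ℝ] V4) (hρ : IsRotationAt e0 ρ) (hρ1 : ρ ≠ LinearMap.id)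
    (hβ : IsBoostAt e0 β) :
    (ρ ∘ₗ β = β ∘ₗ ρ → Nonempty (ESet ρ β ≃ₜ Circle)) ∧
    (ρ ∘ₗ β ≠ β ∘ₗ ρ →
      ∃ e : V4, mg e e = -1 ∧ mg e e0 = 0 ∧ ESet ρ β = {e, -e}) := by
  classical
  obtain ⟨U, hTU, hU0, hUU⟩ := exists_axis hρ
  have huniq := axis_unique hρ hρ1 hTU hU0 hUU
  set c : ℝ := (β e0) 0 with hcdef
  set W : V4 := β e0 - c • e0 with hWdef
  have hβe0 : β e0 = c • e0 + W := by rw [hWdef]; abel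
  have hW0 : W 0 = 0 := by
    have h : W 0 = β e0 0 - c * e0 0 := by rw [hWdef]; rfl
    rw [h, ← hcdef]; simp [e0]
  have hc2 : c ^ 2 = 1 + dd W W := boost_c2 hβ hcdef hWdef
  have hcpos : 0 < c := hβ.1.2.2
  have hfix : ∀ x : V4, x 0 = 0 → dd W x = 0 → β x = x := boost_fix_of_mem hβ hcdef hWdef
  have hmem' : ∀ x : V4, β x = x → x 0 * (c - 1) = 0 ∧ dd W x = 0 :=
    boost_mem_of_fix hβ hcdef hWdef
  -- basic facts about members of `ESet`
  have hEbasic : ∀ e ∈ ESet ρ β, dd e e = 1 ∧ e 0 = 0 ∧ dd U e = 0 ∧ dd W e = 0 := by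
    rintro e ⟨h1, h2, h3, h4⟩
    have he0 : e 0 = 0 := by rw [← mg_e0_right e]; exact h2
    refine ⟨?_, he0, ?_, (hmem' e h4).2⟩
    · rw [mg_dd, he0] at h1; linarith
    · have h5 := h3 U hTU
      rw [mg_dd, hU0] at h5
      rw [dd_comm]
      linarith
  -- sufficient conditions for membership
  have hEmem : ∀ e : V4, dd e e = 1 → e 0 = 0 → dd U e = 0 → dd W e = 0 →
      e ∈ ESet ρ β := by
    intro e h1 h2 h3 h4
    refine ⟨?_, ?_, ?_, hfix e h2 h4⟩
    · rw [mg_dd, h2, h1]; ring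
    · rw [mg_e0_right]; exact h2
    · intro y hy
      rw [huniq y hy, mg_dd]
      have hcomp : (y 0 • e0 + dd U y • U) 0 = y 0 := by
        have h : (y 0 • e0 + dd U y • U) 0 = y 0 * e0 0 + dd U y * U 0 := rfl
        rw [h, hU0]; simp [e0]
      have hde : dd e (y 0 • e0 + dd U y • U) = 0 := by
        rw [dd_add_right, dd_smul_right, dd_smul_right, dd_e0_right, h2,
          dd_comm e U, h3]
        ring
      rw [hcomp, hde, h2]
      ring
  refine ⟨?_, ?_⟩
  · -- commuting case
    intro hcomm
    have hρW : ρ W = W := by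
      have h1 : ρ (β e0) = β e0 := by
        have h2 := LinearMap.ext_iff.mp hcomm e0
        simp only [LinearMap.comp_apply] at h2
        rw [hρ.2] at h2
        exact h2
      rw [hWdef, map_sub, map_smul, h1, hρ.2]
    have hWspan : ∀ e : V4, dd U e = 0 → dd W e = 0 := by
      intro e h3
      have h := huniq W hρW
      rw [hW0, zero_smul, zero_add] at h
      rw [h, dd_smul_left, h3, mul_zero]
    -- orthonormal basis of the rotation plane
    have hone0U : Orthonormal ℝ (![vE e0, vE U] : Fin 2 → E4) :=
      on2 _ _ dd_e0e0 hUU (by rw [dd_e0_left, hU0])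
    set K2 := (Submodule.span ℝ (Set.range (![vE e0, vE U] : Fin 2 → E4)))ᗮ with hK2
    have hfr2 : finrank ℝ K2 = 2 := by
      have hfrspan : finrank ℝ (Submodule.span ℝ (Set.range (![vE e0, vE U] : Fin 2 → E4))) = 2 := by
        rw [finrank_span_eq_card hone0U.linearIndependent]
        simp
      have htot := Submodule.finrank_add_finrank_orthogonal
        (K := Submodule.span ℝ (Set.range (![vE e0, vE U] : Fin 2 → E4)))
      have h4 : finrank ℝ E4 = 4 := finrank_euclideanSpace_fin
      rw [← hK2, hfrspan, h4] at htot
      omega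
    let ob := (stdOrthonormalBasis ℝ K2).reindex (finCongr hfr2)
    set A : V4 := uV ((ob 0 : K2) : E4) with hA
    set B : V4 := uV ((ob 1 : K2) : E4) with hB
    have hAK : vE A ∈ K2 := (ob 0).2
    have hBK : vE B ∈ K2 := (ob 1).2
    have honb := ob.orthonormal
    rw [orthonormal_iff_ite] at honb
    have hAA : dd A A = 1 := by
      rw [← ip_dd]
      rw [show vE A = ((ob 0 : K2) : E4) from rfl]
      rw [← Submodule.coe_inner]
      simpa using honb 0 0
    have hBB : dd B B = 1 := by
      rw [← ip_dd]
      rw [show vE B = ((ob 1 : K2) : E4) from rfl]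
      rw [← Submodule.coe_inner]
      simpa using honb 1 1
    have hAB : dd A B = 0 := by
      rw [← ip_dd]
      rw [show vE A = ((ob 0 : K2) : E4) from rfl,
        show vE B = ((ob 1 : K2) : E4) from rfl]
      rw [← Submodule.coe_inner]
      simpa using honb 0 1
    have hperpA := (Submodule.mem_orthogonal _ _).mp hAK
    have hperpB := (Submodule.mem_orthogonal _ _).mp hBK
    have he0A : dd e0 A = 0 := by
      rw [← ip_dd]; exact hperpA _ (Submodule.subset_span ⟨0, rfl⟩)
    have hUA : dd U A = 0 := by
      rw [← ip_dd]; exact hperpA _ (Submodule.subset_span ⟨1, rfl⟩)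
    have he0B : dd e0 B = 0 := by
      rw [← ip_dd]; exact hperpB _ (Submodule.subset_span ⟨0, rfl⟩)
    have hUB : dd U B = 0 := by
      rw [← ip_dd]; exact hperpB _ (Submodule.subset_span ⟨1, rfl⟩)
    have hA0 : A 0 = 0 := by rw [← dd_e0_left A]; exact he0A
    have hB0 : B 0 = 0 := by rw [← dd_e0_left B]; exact he0B
    have hon4 : Orthonormal ℝ (![vE e0, vE U, vE A, vE B] : Fin 4 → E4) :=
      on4 _ _ _ _ dd_e0e0 hUU hAA hBB (by rw [dd_e0_left, hU0]) he0A he0B hUA hUB hAB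
    have hcomp4 := complete4 e0 U A B hon4
    -- members of `ESet` are exactly the unit circle of the plane spanned by A, B
    have hrep : ∀ e ∈ ESet ρ β,
        e = dd A e • A + dd B e • B ∧ (dd A e) ^ 2 + (dd B e) ^ 2 = 1 := by
      intro e he
      obtain ⟨h1, h2, h3, _⟩ := hEbasic e he
      have hc4 := hcomp4 e
      rw [dd_e0_left, h2, h3, zero_smul, zero_smul, zero_add, zero_add] at hc4
      refine ⟨hc4, ?_⟩
      have h5 : dd e e = dd A e * dd A e + dd B e * dd B e := by
        nth_rewrite 1 [hc4]
        simp only [dd_add_left, dd_smul_left]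
      rw [h1] at h5
      nlinarith [h5]
    have hmem2 : ∀ a b : ℝ, a ^ 2 + b ^ 2 = 1 → (a • A + b • B) ∈ ESet ρ β := by
      intro a b hab
      have hcomp0 : (a • A + b • B) 0 = 0 := by
        have h : (a • A + b • B) 0 = a * A 0 + b * B 0 := rfl
        rw [h, hA0, hB0]; ring
      have hU' : dd U (a • A + b • B) = 0 := by
        rw [dd_add_right, dd_smul_right, dd_smul_right, hUA, hUB]; ring
      have hBA : dd B A = 0 := by rw [dd_comm]; exact hAB
      apply hEmem
      · simp only [dd_add_left, dd_add_right, dd_smul_left, dd_smul_right,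
          hAA, hBB, hAB, hBA]
        nlinarith [hab]
      · exact hcomp0
      · exact hU'
      · exact hWspan _ hU'
    -- construct the homeomorphism
    refine ⟨Homeomorph.mk (Equiv.mk
      (fun e => mkC (dd A e.1) (dd B e.1) (hrep e.1 e.2).2)
      (fun z => ⟨(z : ℂ).re • A + (z : ℂ).im • B, by
        apply hmem2
        have := Circle.normSq_coe z
        rw [Complex.normSq_apply] at this
        nlinarith [this]⟩)
      ?_ ?_) ?_ ?_⟩
    · -- left inverse
      intro e
      apply Subtype.ext
      show (mkC (dd A e.1) (dd B e.1) (hrep e.1 e.2).2 : ℂ).re • A +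
        (mkC (dd A e.1) (dd B e.1) (hrep e.1 e.2).2 : ℂ).im • B = e.1
      rw [mkC_coe]
      exact (hrep e.1 e.2).1.symm
    · -- right inverse
      intro z
      apply Circle.ext
      rw [mkC_coe]
      apply Complex.ext
      · show dd A ((z : ℂ).re • A + (z : ℂ).im • B) = (z : ℂ).re
        rw [dd_add_right, dd_smul_right, dd_smul_right, hAA, hAB]
        ring
      · show dd B ((z : ℂ).re • A + (z : ℂ).im • B) = (z : ℂ).im
        rw [dd_add_right, dd_smul_right, dd_smul_right, dd_comm B A, hAB, hBB]
        ring
    · -- continuity of toFun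
      apply Continuous.subtype_mk
      have h : (fun e : ESet ρ β => ((⟨dd A e.1, dd B e.1⟩ : ℂ))) =
          fun e : ESet ρ β => ((dd A e.1 : ℝ) : ℂ) + ((dd B e.1 : ℝ) : ℂ) * Complex.I := by
        funext e; rw [Complex.mk_eq_add_mul_I]
      show Continuous (fun e : ESet ρ β => ((⟨dd A e.1, dd B e.1⟩ : ℂ)))
      rw [h]
      exact (Complex.continuous_ofReal.comp ((cont_dd A).comp continuous_subtype_val)).add
        (((Complex.continuous_ofReal.comp ((cont_dd B).comp continuous_subtype_val))).mul
          continuous_const)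
    · -- continuity of invFun
      apply Continuous.subtype_mk
      exact ((Complex.continuous_re.comp continuous_subtype_val).smul continuous_const).add
        ((Complex.continuous_im.comp continuous_subtype_val).smul continuous_const)
  · -- non-commuting case
    intro hncomm
    have hWne : W ≠ 0 := by
      intro hWz
      apply hncomm
      have hc1 : c = 1 := by
        rw [hWz, dd_zero_left] at hc2
        nlinarith [hcpos, hc2]
      have hβe0' : β e0 = e0 := by
        rw [hβe0, hWz, hc1, one_smul, add_zero]
      have hid : ∀ x, β x = x := by
        intro x
        have hx' : β (x - x 0 • e0) = x - x 0 • e0 := by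
          apply hfix
          · have h : (x - x 0 • e0) 0 = x 0 - x 0 * e0 0 := rfl
            rw [h]; simp [e0]
          · rw [hWz, dd_zero_left]
        have hxdec : x 0 • e0 + (x - x 0 • e0) = x := by abel
        calc β x = β (x 0 • e0 + (x - x 0 • e0)) := by rw [hxdec]
          _ = x 0 • β e0 + β (x - x 0 • e0) := by rw [map_add, map_smul]
          _ = x 0 • e0 + (x - x 0 • e0) := by rw [hβe0', hx']
          _ = x := hxdec
      apply LinearMap.ext
      intro x
      simp [LinearMap.comp_apply, hid]
    set sUW : ℝ := dd U W with hsUW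
    set W' : V4 := W - sUW • U with hW'
    have hW'0 : W' 0 = 0 := by
      have h : W' 0 = W 0 - sUW * U 0 := rfl
      rw [h, hW0, hU0]; ring
    have hUW' : dd U W' = 0 := by
      rw [hW', dd_sub_right, dd_smul_right, hUU, ← hsUW]
      ring
    have hWW' : ∀ e : V4, dd U e = 0 → dd W' e = 0 → dd W e = 0 := by
      intro e h3 h4
      have h : W = W' + sUW • U := by rw [hW']; abel
      rw [h, dd_add_left, dd_smul_left, h4, h3]
      ring
    have hW'ne : W' ≠ 0 := by
      intro hW'z
      apply hncomm
      have hWsU : W = sUW • U := by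
        have h := hW'z
        rw [hW'] at h
        exact sub_eq_zero.mp h
      have hfixq : ∀ q : V4, q 0 = 0 → dd U q = 0 → β q = q := by
        intro q h1 h2
        apply hfix q h1
        rw [hWsU, dd_smul_left, h2, mul_zero]
      have hβUspan : ∃ a b : ℝ, β U = a • e0 + b • U := by
        have hmemP : vE (β U) ∈ (Submodule.span ℝ ({vE e0, vE U} : Set E4))ᗮᗮ := by
          rw [Submodule.mem_orthogonal]
          intro q hq
          have hperpq := (Submodule.mem_orthogonal _ _).mp hq
          have hq0 : dd e0 (uV q) = 0 := by
            have h := hperpq (vE e0) (Submodule.subset_span (Set.mem_insert _ _))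
            rw [← ip_dd]
            exact h
          have hq0' : (uV q) 0 = 0 := by rw [← dd_e0_left (uV q)]; exact hq0
          have hqU : dd U (uV q) = 0 := by
            have h := hperpq (vE U) (Submodule.subset_span
              (Set.mem_insert_of_mem _ rfl))
            rw [dd_comm, ← ip_dd, real_inner_comm]
            exact h
          have hβq : β (uV q) = uV q := hfixq (uV q) hq0' hqU
          show (inner ℝ (vE (uV q)) (vE (β U)) : ℝ) = 0
          rw [ip_dd]
          rw [← boost_sa hβ (uV q) U, hβq]
          rw [dd_comm]
          exact hqU
        rw [Submodule.orthogonal_orthogonal] at hmemP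
        obtain ⟨a, b, hab⟩ := Submodule.mem_span_pair.mp hmemP
        exact ⟨a, b, congrArg uV hab.symm⟩
      obtain ⟨a, b, hβU⟩ := hβUspan
      apply LinearMap.ext
      intro x
      simp only [LinearMap.comp_apply]
      set p : V4 := x - x 0 • e0 - dd U x • U with hp
      have hp0 : p 0 = 0 := by
        have h : p 0 = x 0 - x 0 * e0 0 - dd U x * U 0 := rfl
        rw [h, hU0]; simp [e0]
      have hpU : dd U p = 0 := by
        rw [hp, dd_sub_right, dd_sub_right, dd_smul_right, dd_smul_right,
          dd_e0_right, hU0, hUU]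
        ring
      have hβp : β p = p := hfixq p hp0 hpU
      have hρp0 : ρ p 0 = 0 := by rw [rot0 hρ]; exact hp0
      have hρpU : dd U (ρ p) = 0 := by
        nth_rewrite 1 [← hTU]
        rw [rotdd hρ]
        exact hpU
      have hβρp : β (ρ p) = ρ p := hfixq _ hρp0 hρpU
      have hρβe0 : ρ (β e0) = β e0 := by
        rw [hβe0, hWsU, map_add, map_smul, map_smul, hρ.2, hTU]
      have hρβU : ρ (β U) = β U := by
        rw [hβU, map_add, map_smul, map_smul, hρ.2, hTU]
      have hxdec : x = x 0 • e0 + dd U x • U + p := by rw [hp]; abel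
      rw [hxdec]
      simp only [map_add, map_smul, hβp, hβρp, hρβe0, hρβU, hρ.2, hTU]
    -- construct the distinguished vector e
    obtain ⟨t3, hW2⟩ := exists_unit W' hW'ne
    set W2 : V4 := t3 • W' with hW2def
    have ht3ne : t3 ≠ 0 := by
      intro h
      have h2 : dd (t3 • W') (t3 • W') = 1 := by rw [← hW2def]; exact hW2
      rw [h, zero_smul, dd_zero_left] at h2
      norm_num at h2
    have hW20 : W2 0 = 0 := by
      have h : W2 0 = t3 * W' 0 := rfl
      rw [h, hW'0, mul_zero]
    have hUW2 : dd U W2 = 0 := by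
      rw [hW2def, dd_smul_right, hUW', mul_zero]
    have he0W2 : dd e0 W2 = 0 := by rw [dd_e0_left, hW20]
    have hon3' : Orthonormal ℝ (![vE e0, vE U, vE W2] : Fin 3 → E4) :=
      on3 _ _ _ dd_e0e0 hUU hW2 (by rw [dd_e0_left, hU0]) he0W2 hUW2
    set K3 := (Submodule.span ℝ (Set.range (![vE e0, vE U, vE W2] : Fin 3 → E4)))ᗮ with hK3
    have hfrK3 : finrank ℝ K3 = 1 := by
      have hfrspan : finrank ℝ (Submodule.span ℝ (Set.range (![vE e0, vE U, vE W2] : Fin 3 → E4))) = 3 := by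
        rw [finrank_span_eq_card hon3'.linearIndependent]
        simp
      have htot := Submodule.finrank_add_finrank_orthogonal
        (K := Submodule.span ℝ (Set.range (![vE e0, vE U, vE W2] : Fin 3 → E4)))
      have h4 : finrank ℝ E4 = 4 := finrank_euclideanSpace_fin
      rw [← hK3, hfrspan, h4] at htot
      omega
    have hK3ne : K3 ≠ ⊥ := by
      intro h
      rw [h] at hfrK3
      simp at hfrK3
    obtain ⟨x0E, hx0K, hx0ne⟩ := Submodule.ne_bot_iff K3 |>.mp hK3ne
    obtain ⟨t4, hee⟩ := exists_unit (uV x0E) (by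
        intro h; apply hx0ne; have := congrArg (WithLp.toLp 2) h; simpa [uV] using this)
    set e : V4 := t4 • uV x0E with hedef
    have heK : vE e ∈ K3 := K3.smul_mem t4 hx0K
    have hperpe := (Submodule.mem_orthogonal _ _).mp heK
    have he0e : dd e0 e = 0 := by
      rw [← ip_dd]; exact hperpe _ (Submodule.subset_span ⟨0, rfl⟩)
    have hUe : dd U e = 0 := by
      rw [← ip_dd]; exact hperpe _ (Submodule.subset_span ⟨1, rfl⟩)
    have hW2e : dd W2 e = 0 := by
      rw [← ip_dd]; exact hperpe _ (Submodule.subset_span ⟨2, rfl⟩)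
    have hW'e : dd W' e = 0 := by
      rw [hW2def, dd_smul_left] at hW2e
      exact (mul_eq_zero.mp hW2e).resolve_left ht3ne
    have hWe : dd W e = 0 := hWW' e hUe hW'e
    have he0' : e 0 = 0 := by rw [← dd_e0_left e]; exact he0e
    have heE : e ∈ ESet ρ β := hEmem e hee he0' hUe hWe
    have hnegE : -e ∈ ESet ρ β := by
      apply hEmem
      · rw [dd_neg_left, dd_neg_right, hee]; ring
      · show -(e 0) = 0
        rw [he0']; ring
      · rw [dd_neg_right, hUe]; ring
      · rw [dd_neg_right, hWe]; ring
    have hene : e ≠ 0 := by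
      intro h
      rw [h, dd_zero_left] at hee
      norm_num at hee
    refine ⟨e, ?_, ?_, ?_⟩
    · rw [mg_dd, he0', hee]; ring
    · rw [mg_e0_right]; exact he0'
    · ext e'
      simp only [Set.mem_insert_iff, Set.mem_singleton_iff]
      constructor
      · intro he'
        obtain ⟨h1, h2, h3, h4⟩ := hEbasic e' he'
        have he'K : vE e' ∈ K3 := by
          rw [hK3]
          apply mem_orth
          intro q hq
          obtain ⟨i, hi⟩ := hq
          fin_cases i
          · have hq' : e0 = q := congrArg uV hi
            rw [← hq', dd_e0_left]
            exact h2
          · have hq' : U = q := congrArg uV hi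
            rw [← hq']
            exact h3
          · have hq' : W2 = q := congrArg uV hi
            rw [← hq', hW2def, dd_smul_left]
            have hW'e' : dd W' e' = 0 := by
              rw [hW', dd_sub_left, dd_smul_left, h3, h4]
              ring
            rw [hW'e', mul_zero]
        have hspan : Submodule.span ℝ {vE e} = K3 := by
          apply Submodule.eq_of_le_of_finrank_le
          · rw [Submodule.span_singleton_le_iff_mem]
            exact heK
          · rw [hfrK3, finrank_span_singleton (show vE e ≠ 0 from fun h => hene (congrArg uV h))]
        obtain ⟨t5, ht5⟩ := Submodule.mem_span_singleton.mp (hspan ▸ he'K)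
        have ht5' : e' = t5 • e := congrArg uV ht5.symm
        have ht5sq : t5 * t5 = 1 := by
          rw [ht5', dd_smul_left, dd_smul_right, hee] at h1
          linarith
        rcases mul_self_eq_one_iff.mp ht5sq with h | h
        · left; rw [ht5', h, one_smul]
        · right; rw [ht5', h, neg_smul, one_smul]
      · rintro (rfl | rfl)
        · exact heE
        · exact hnegE
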